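/- arXiv:2212.09370 — 7 statements merged into one kernel-verified Lean document; each statement's English description precedes it below -/
import Mathlib

section
/- Let A be an n×n complex matrix and P(w) = Π_{ℓ=1}^{p}(w − w_ℓ) a polynomial with P(A) = 0. Define E_k = Π_{ℓ=1}^{k}(A − w_ℓ)·ℂⁿ and N_k = dim E_k for k = 0,...,p. Then tr A = Σ_{k=1}^{p} w_k (N_{k−1} − N_k). -/
open LinearMap Module

lemma aux_trace_decomp {V : Type*} [AddCommGroup V] [Module ℂ V] [FiniteDimensional ℂ V]
    (f : V →ₗ[ℂ] V) (E : Submodule ℂ V) (hE : ∀ x ∈ E, f x ∈ E) :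
    LinearMap.trace ℂ V f =
      LinearMap.trace ℂ E (f.restrict hE) +
      LinearMap.trace ℂ (V ⧸ E) (E.mapQ E f hE) := by
  obtain ⟨W, hW⟩ := Submodule.exists_isCompl E
  set π : V →ₗ[ℂ] E := E.linearProjOfIsCompl W hW with hπ
  have hr : ∀ x ∈ E, f x - E.subtype (π (f x)) = 0 := by
    intro x hx
    have : π (f x) = ⟨f x, hE x hx⟩ := Submodule.linearProjOfIsCompl_apply_left hW ⟨f x, hE x hx⟩
    simp [this]
  set r : V →ₗ[ℂ] V := f - E.subtype ∘ₗ π ∘ₗ f with hrdef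
  have hker : E ≤ LinearMap.ker r := by
    intro x hx
    simp only [LinearMap.mem_ker, hrdef, LinearMap.sub_apply, LinearMap.comp_apply]
    exact hr x hx
  have hsplit : f = (E.subtype ∘ₗ (π ∘ₗ f)) + ((E.liftQ r hker) ∘ₗ E.mkQ) := by
    ext x
    simp [hrdef]
  conv_lhs => rw [hsplit]
  rw [map_add]
  congr 1
  · rw [LinearMap.trace_comp_comm']
    congr 1
    ext x
    have : π (f x) = ⟨f ↑x, hE x x.2⟩ := Submodule.linearProjOfIsCompl_apply_left hW ⟨f x, hE x x.2⟩
    simp [this]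
  · rw [LinearMap.trace_comp_comm']
    congr 1
    ext x
    simp [hrdef, Submodule.mapQ_apply, Submodule.Quotient.mk_sub,
      (Submodule.Quotient.mk_eq_zero E).2 (Submodule.coe_mem (π (f x)))]

lemma aux_flag_trace : ∀ (p : ℕ) {V : Type} [AddCommGroup V] [Module ℂ V]
    [FiniteDimensional ℂ V] (f : V →ₗ[ℂ] V) (w : Fin p → ℂ) (E : ℕ → Submodule ℂ V),
    E 0 = ⊤ → E p = ⊥ →
    (∀ k : Fin p, E (k.1 + 1) ≤ E k.1) →
    (∀ k : Fin p, ∀ x ∈ E k.1, f x - w k • x ∈ E (k.1 + 1)) →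
    LinearMap.trace ℂ V f =
      ∑ k : Fin p, w k * ((finrank ℂ (E k.1) : ℂ) - (finrank ℂ (E (k.1 + 1)) : ℂ)) := by
  intro p
  induction p with
  | zero =>
    intro V _ _ _ f w E h0 hp _ _
    have : Subsingleton V := by
      refine subsingleton_of_forall_eq 0 fun x => ?_
      have : x ∈ E 0 := h0 ▸ Submodule.mem_top
      rwa [hp, Submodule.mem_bot] at this
    simp [Subsingleton.elim f 0]
  | succ p ih =>
    intro V _ _ _ f w E h0 hp hmono hf
    set E1 := E 1 with hE1
    have hf0 : ∀ x : V, f x - w 0 • x ∈ E1 := by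
      intro x
      have h := hf 0 x (by simp only [Fin.val_zero]; rw [h0]; trivial)
      simpa using h
    have hinv : ∀ x ∈ E1, f x ∈ E1 := by
      intro x hx
      have h := hf0 x
      have hx2 : f x = (f x - w 0 • x) + w 0 • x := by rw [sub_add_cancel]
      rw [hx2]
      exact E1.add_mem h (E1.smul_mem _ hx)
    have hle : E1 ≤ Submodule.comap f E1 := hinv
    have hq : E1.mapQ E1 f hle = w 0 • LinearMap.id := by
      refine Submodule.linearMap_qext _ ?_
      ext y
      show E1.mkQ (f y) = w 0 • E1.mkQ y
      rw [← map_smul, ← sub_eq_zero, ← map_sub, Submodule.mkQ_apply,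
        Submodule.Quotient.mk_eq_zero]
      exact hf0 y
    have hquot : (finrank ℂ (V ⧸ E1) : ℂ) = (finrank ℂ V : ℂ) - (finrank ℂ E1 : ℂ) := by
      rw [eq_sub_iff_add_eq]
      exact_mod_cast congrArg (Nat.cast (R := ℂ)) (Submodule.finrank_quotient_add_finrank E1)
    -- chain: E (j+1) ≤ E 1 for j ≤ p
    have hchain : ∀ j : ℕ, j ≤ p → E (j + 1) ≤ E1 := by
      intro j
      induction j with
      | zero => intro _; exact le_rfl
      | succ j ihj =>
        intro hj
        exact le_trans (hmono ⟨j + 1, by omega⟩) (ihj (by omega))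
    -- restricted flag on E1
    set E' : ℕ → Submodule ℂ E1 := fun j => Submodule.comap E1.subtype (E (j + 1)) with hE'
    have hE'0 : E' 0 = ⊤ := by
      rw [hE']
      simp [hE1, Submodule.comap_subtype_self]
    have hE'p : E' p = ⊥ := by
      rw [hE']
      simp only [hp]
      ext x
      simp
    have hmono' : ∀ k : Fin p, E' (k.1 + 1) ≤ E' k.1 :=
      fun k => Submodule.comap_mono (hmono ⟨k.1 + 1, by omega⟩)
    have hf' : ∀ k : Fin p, ∀ x ∈ E' k.1,
        (f.restrict hinv) x - w k.succ • x ∈ E' (k.1 + 1) := by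
      intro k x hx
      have hxm : (x : V) ∈ E (k.1 + 1) := hx
      have h := hf k.succ x hxm
      simpa [hE', Submodule.mem_comap, LinearMap.restrict_coe_apply] using h
    have hrank' : ∀ j : ℕ, j ≤ p → finrank ℂ (E' j) = finrank ℂ (E (j + 1)) := by
      intro j hj
      exact LinearEquiv.finrank_eq (Submodule.comapSubtypeEquivOfLe (hchain j hj))
    have hmain := aux_trace_decomp f E1 hinv
    rw [hmain, hq, ih (f.restrict hinv) (fun k => w k.succ) E' hE'0 hE'p hmono' hf']
    rw [map_smul, LinearMap.trace_id]
    rw [Fin.sum_univ_succ, add_comm]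
    have hsum : (∑ k : Fin p, w k.succ * ((finrank ℂ (E' k.1) : ℂ) - (finrank ℂ (E' (k.1 + 1)) : ℂ)))
        = ∑ i : Fin p, w i.succ * ((finrank ℂ (E i.succ.1) : ℂ) - (finrank ℂ (E (i.succ.1 + 1)) : ℂ)) := by
      refine Finset.sum_congr rfl fun k _ => ?_
      rw [hrank' k.1 (by omega), hrank' (k.1 + 1) (by omega)]
      simp [Fin.val_succ]
    rw [hsum]
    have hq2 : w 0 • ((finrank ℂ (V ⧸ E1) : ℂ))
        = w 0 * ((finrank ℂ (E (0:Fin (p+1)).1) : ℂ) - (finrank ℂ (E ((0:Fin (p+1)).1 + 1)) : ℂ)) := by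
      simp only [Fin.val_zero, smul_eq_mul, zero_add]
      rw [hquot]
      simp only [mul_eq_mul_left_iff]
      left
      have e0 : (finrank ℂ (E 0) : ℂ) = finrank ℂ V := by rw [h0, finrank_top]
      exact congrArg₂ (· - ·) e0.symm rfl
    rw [hq2]



/-- Let `A` be an `n×n` complex matrix annihilated by
`P(w) = ∏_{ℓ=1}^{p} (w - w_ℓ)`.  With `M k = ∏_{ℓ≤k} (A - w_ℓ)` (ordered product of the
first `k` factors), `E_k = M k · ℂⁿ` and `N_k = dim E_k`, one has
`tr A = ∑_{k=1}^{p} w_k (N_{k-1} - N_k)`. -/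
theorem trace_eq_sum_exponents (n p : ℕ) (A : Matrix (Fin n) (Fin n) ℂ) (w : Fin p → ℂ)
    (M : ℕ → Matrix (Fin n) (Fin n) ℂ)
    (hM : ∀ k, M k =
      (((List.finRange p).take k).map
        (fun ℓ => A - w ℓ • (1 : Matrix (Fin n) (Fin n) ℂ))).prod)
    (hP : M p = 0)
    (N : ℕ → ℕ)
    (hN : ∀ k, N k = Module.finrank ℂ (LinearMap.range (Matrix.toLin' (M k)))) :
    A.trace = ∑ k : Fin p, w k * ((N k.1 : ℂ) - (N (k.1 + 1) : ℂ)) := by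
  classical
  set D : Fin p → Matrix (Fin n) (Fin n) ℂ := fun ℓ => A - w ℓ • 1 with hD
  set L : List (Matrix (Fin n) (Fin n) ℂ) := (List.finRange p).map D with hL
  have hLlen : L.length = p := by simp [hL]
  have hMk : ∀ k, M k = (L.take k).prod := by
    intro k
    rw [hM k, hL, List.map_take]
  have hMsucc : ∀ k : Fin p, M (k.1 + 1) = M k.1 * D k := by
    intro k
    rw [hMk, hMk, List.prod_take_succ L k.1 (by omega)]
    congr 1
    simp [hL]
  have hDD : ∀ a b : ℂ, Commute (A - a • (1 : Matrix (Fin n) (Fin n) ℂ)) (A - b • 1) := by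
    intro a b
    have h1 : Commute A (b • (1 : Matrix (Fin n) (Fin n) ℂ)) := (Commute.one_right A).smul_right b
    have h2 : Commute (a • (1 : Matrix (Fin n) (Fin n) ℂ)) A := (Commute.one_left A).smul_left a
    have h3 : Commute (a • (1 : Matrix (Fin n) (Fin n) ℂ)) (b • 1) :=
      ((Commute.refl (1 : Matrix (Fin n) (Fin n) ℂ)).smul_left a).smul_right b
    exact Commute.sub_left ((Commute.refl A).sub_right h1) (h2.sub_right h3)
  have hcomm : ∀ k : Fin p, Commute (D k) (M k.1) := by
    intro k
    rw [hMk]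
    apply Commute.list_prod_right
    intro y hy
    have hy' : y ∈ L := List.mem_of_mem_take hy
    rw [hL, List.mem_map] at hy'
    obtain ⟨ℓ, -, rfl⟩ := hy'
    exact hDD _ _
  set E : ℕ → Submodule ℂ (Fin n → ℂ) :=
    fun k => LinearMap.range (Matrix.toLin' (M k)) with hE
  have h0 : E 0 = ⊤ := by
    rw [hE]
    simp only [hMk 0, List.take_zero, List.prod_nil, Matrix.toLin'_one]
    exact LinearMap.range_id
  have hpbot : E p = ⊥ := by
    rw [hE]
    simp only [hP, map_zero, LinearMap.range_zero]
  have hmono : ∀ k : Fin p, E (k.1 + 1) ≤ E k.1 := by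
    intro k
    rw [hE]
    simp only [hMsucc k, Matrix.toLin'_mul]
    exact LinearMap.range_comp_le_range _ _
  have hf : ∀ k : Fin p, ∀ x ∈ E k.1,
      (Matrix.toLin' A) x - w k • x ∈ E (k.1 + 1) := by
    intro k x hx
    obtain ⟨y, rfl⟩ := hx
    have hkey : (Matrix.toLin' A) ((Matrix.toLin' (M k.1)) y) - w k • ((Matrix.toLin' (M k.1)) y)
        = Matrix.toLin' (M (k.1 + 1)) y := by
      rw [hMsucc k, ← (hcomm k).eq, Matrix.toLin'_mul]
      have : Matrix.toLin' (D k) = Matrix.toLin' A - w k • LinearMap.id := by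
        rw [hD]
        simp only [map_sub, map_smul, Matrix.toLin'_one]
      simp [this]
    rw [hkey]
    exact LinearMap.mem_range_self _ y
  have htr : A.trace = LinearMap.trace ℂ (Fin n → ℂ) (Matrix.toLin' A) := by
    rw [LinearMap.trace_eq_matrix_trace ℂ (Pi.basisFun ℂ (Fin n)),
      LinearMap.toMatrix_eq_toMatrix', LinearMap.toMatrix'_toLin']
  rw [htr, aux_flag_trace p (Matrix.toLin' A) w E h0 hpbot hmono hf]
  refine Finset.sum_congr rfl fun k _ => ?_
  rw [hN k.1, hN (k.1 + 1)]
end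

section
/- Let A be an n×n complex matrix annihilated by Π_{a≤p}(w − w_a), fix an index j, and let E = Π_{a<j}(A − w_a)·ℂⁿ, an A-invariant subspace. If w_j ≠ w_{j+1}, then dim((A − w_{j+1})(A − w_j)E) = dim((A − w_j)(A − w_{j+1})E), and moreover dim((A − w_{j+1})E) = dim E + dim((A − w_{j+1})(A − w_j)E) − dim((A − w_j)E) ... specifically: setting N_{j−1} = dim E, N_j = dim((A−w_j)E), N_{j+1} = dim((A−w_{j+1})(A−w_j)E), N'_j = dim((A−w_{j+1})E), one has N'_j = N_{j+1} + N_{j−1} − N_j. -/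
-- commuting factors
lemma comm_factors (n : ℕ) (A : Matrix (Fin n) (Fin n) ℂ) (a b : ℂ) :
    Commute (A - a • (1 : Matrix (Fin n) (Fin n) ℂ)) (A - b • (1 : Matrix (Fin n) (Fin n) ℂ)) := by
  have h1 : Commute A (b • (1 : Matrix (Fin n) (Fin n) ℂ)) := (Commute.one_right A).smul_right b
  have h2 : Commute (a • (1 : Matrix (Fin n) (Fin n) ℂ)) A := (Commute.one_left A).smul_left a
  have h3 : Commute (a • (1 : Matrix (Fin n) (Fin n) ℂ)) (b • (1 : Matrix (Fin n) (Fin n) ℂ)) :=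
    (((Commute.refl (1 : Matrix (Fin n) (Fin n) ℂ))).smul_left a).smul_right b
  exact ((Commute.refl A).sub_left h2).sub_right (h1.sub_left h3)

set_option synthInstance.maxHeartbeats 800000 in
lemma rank_map_inf_ker (n : ℕ) (f : (Fin n → ℂ) →ₗ[ℂ] (Fin n → ℂ)) (S : Submodule ℂ (Fin n → ℂ)) :
    Module.finrank ℂ (Submodule.map f S) + Module.finrank ℂ ((LinearMap.ker f) ⊓ S : Submodule ℂ (Fin n → ℂ))
      = Module.finrank ℂ S := by
  have h := LinearMap.finrank_range_add_finrank_ker (f.domRestrict S)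
  rw [LinearMap.range_domRestrict, LinearMap.ker_domRestrict] at h
  have hc : Submodule.comap S.subtype (LinearMap.ker f)
      = Submodule.comap S.subtype ((LinearMap.ker f) ⊓ S) := by
    ext x; simp [x.2]
  rw [hc] at h
  have he : Module.finrank ℂ (Submodule.comap S.subtype (LinearMap.ker f ⊓ S))
      = Module.finrank ℂ ((LinearMap.ker f ⊓ S) : Submodule ℂ (Fin n → ℂ)) :=
    (Submodule.comapSubtypeEquivOfLe (inf_le_right : LinearMap.ker f ⊓ S ≤ S)).finrank_eq
  rw [he] at h
  exact h

lemma comm_prod (n : ℕ) (A : Matrix (Fin n) (Fin n) ℂ) (w : ℕ → ℂ) (c : ℂ) (j : ℕ) :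
    Commute (A - c • (1 : Matrix (Fin n) (Fin n) ℂ))
      (((List.range j).map (fun a => A - w a • (1 : Matrix (Fin n) (Fin n) ℂ))).prod) := by
  apply Commute.list_prod_right
  intro x hx
  simp only [List.mem_map] at hx
  obtain ⟨a, -, rfl⟩ := hx
  exact comm_factors n A c (w a)


/-- Let `A` be annihilated by `∏_{a<p}(w - w_a)`, fix `j` with `j+1 < p`,
and let `E = ∏_{a<j}(A - w_a)·ℂⁿ`.  If `w j ≠ w (j+1)` then the dimensions of the two
double images agree, and setting `N_{j-1} = dim E`, `N_j = dim (A-w_j)E`,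
`N_{j+1} = dim (A-w_{j+1})(A-w_j)E`, `N'_j = dim (A-w_{j+1})E`, one has the
Weyl-reflection identity `N'_j = N_{j+1} + N_{j-1} - N_j` (stated additively). -/
theorem swap_factors_reflection (n p : ℕ) (A : Matrix (Fin n) (Fin n) ℂ) (w : ℕ → ℂ)
    (hP : (((List.range p).map
      (fun a => A - w a • (1 : Matrix (Fin n) (Fin n) ℂ))).prod) = 0)
    (j : ℕ) (hj : j + 1 < p) (hw : w j ≠ w (j + 1))
    (E : Submodule ℂ (Fin n → ℂ))
    (hE : E = LinearMap.range (Matrix.toLin'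
      (((List.range j).map (fun a => A - w a • (1 : Matrix (Fin n) (Fin n) ℂ))).prod))) :
    Module.finrank ℂ
        (Submodule.map (Matrix.toLin' (A - w (j+1) • (1 : Matrix (Fin n) (Fin n) ℂ)))
          (Submodule.map (Matrix.toLin' (A - w j • (1 : Matrix (Fin n) (Fin n) ℂ))) E))
      = Module.finrank ℂ
        (Submodule.map (Matrix.toLin' (A - w j • (1 : Matrix (Fin n) (Fin n) ℂ)))
          (Submodule.map (Matrix.toLin' (A - w (j+1) • (1 : Matrix (Fin n) (Fin n) ℂ))) E))
    ∧ Module.finrank ℂ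
        (Submodule.map (Matrix.toLin' (A - w (j+1) • (1 : Matrix (Fin n) (Fin n) ℂ))) E)
      + Module.finrank ℂ
        (Submodule.map (Matrix.toLin' (A - w j • (1 : Matrix (Fin n) (Fin n) ℂ))) E)
      = Module.finrank ℂ
        (Submodule.map (Matrix.toLin' (A - w (j+1) • (1 : Matrix (Fin n) (Fin n) ℂ)))
          (Submodule.map (Matrix.toLin' (A - w j • (1 : Matrix (Fin n) (Fin n) ℂ))) E))
      + Module.finrank ℂ E := by
  set fM := A - w (j+1) • (1 : Matrix (Fin n) (Fin n) ℂ) with hfM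
  set gM := A - w j • (1 : Matrix (Fin n) (Fin n) ℂ) with hgM
  set f := Matrix.toLin' fM
  set g := Matrix.toLin' gM
  have hcomm : fM * gM = gM * fM := (comm_factors n A (w (j+1)) (w j)).eq
  have hswap : Submodule.map f (Submodule.map g E) = Submodule.map g (Submodule.map f E) := by
    rw [← Submodule.map_comp, ← Submodule.map_comp, ← Matrix.toLin'_mul, ← Matrix.toLin'_mul,
      hcomm]
  refine ⟨by rw [hswap], ?_⟩
  -- g E ≤ E
  have hgE : Submodule.map g E ≤ E := by
    rw [hE, ← LinearMap.range_comp, ← Matrix.toLin'_mul, (comm_prod n A w (w j) j).eq,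
      Matrix.toLin'_mul, LinearMap.range_comp]
    exact Submodule.map_le_iff_le_comap.mpr (fun x hx => Submodule.mem_comap.mpr
      (by exact ⟨_, rfl⟩))
  -- ker f ⊓ map g E = ker f ⊓ E
  have hker : (LinearMap.ker f ⊓ Submodule.map g E : Submodule ℂ (Fin n → ℂ))
      = LinearMap.ker f ⊓ E := by
    refine le_antisymm (inf_le_inf_left _ hgE) ?_
    rintro x ⟨hxk, hxE⟩
    refine ⟨hxk, ?_⟩
    have hfx : f x = 0 := hxk
    set c : ℂ := w (j + 1) - w j with hc
    have hc0 : c ≠ 0 := sub_ne_zero.mpr hw.symm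
    have hgfx : g x = c • x := by
      have hm : gM = fM + c • (1 : Matrix (Fin n) (Fin n) ℂ) := by
        rw [hfM, hgM, hc, sub_smul]; abel
      have : g = f + c • (LinearMap.id : (Fin n → ℂ) →ₗ[ℂ] (Fin n → ℂ)) := by
        rw [show g = Matrix.toLin' gM from rfl, hm, map_add, map_smul, Matrix.toLin'_one]
      rw [this]
      simp [hfx]
    refine ⟨c⁻¹ • x, E.smul_mem _ hxE, ?_⟩
    rw [map_smul, hgfx, smul_smul, inv_mul_cancel₀ hc0, one_smul]
  have h1 := rank_map_inf_ker n f E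
  have h2 := rank_map_inf_ker n f (Submodule.map g E)
  rw [hker] at h2
  omega
end

section
/- Let A be an n×n Hermitian matrix whose eigenvalues all lie in {w_1,...,w_p} with w_1 ≤ w_2 ≤ ... ≤ w_p real. Then by induction there exist matrices X_ℓ of sizes N_{ℓ−1} × N_ℓ (where N_0 = n and N_ℓ = rank Π_{a≤ℓ}(A − w_a)) such that X_1 X_1† = A − w_1·𝟙 and X_{ℓ+1} X_{ℓ+1}† = X_ℓ† X_ℓ − (w_{ℓ+1} − w_ℓ)·𝟙 for every ℓ ≥ 1, each right-hand side being positive semidefinite of rank N_ℓ... In particular, for the base step: if X X† = A − w·𝟙 with X of size n×N and full column rank N, then X† X − (w' − w)·𝟙 is Hermitian, and it is positive semidefinite of rank equal to rank((A − w)(A − w')) whenever w ≤ w' and all eigenvalues of A lie in {w_1,...,w_p}. -/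
open Matrix
open scoped ComplexOrder

/-- inductive step of the Hermitian factorization: `A` Hermitian with all
eigenvalues among `w₁ ≤ … ≤ w_p`, consecutive values `w := w_ℓ ≤ w' := w_{ℓ+1}`.  If
`X Xᴴ = A - w·𝟙` with `X` of size `n × N` of full column rank `N`, then
`Xᴴ X - (w' - w)·𝟙` is Hermitian, positive semidefinite, and of rank equal to
`rank ((A - w)(A - w'))`. -/
theorem hermitian_induction_step (n N p : ℕ) (A : Matrix (Fin n) (Fin n) ℂ)
    (hA : A.IsHermitian)
    (w : Fin p → ℝ) (hmono : Monotone w)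
    (heig : ∀ j, ∃ ℓ, hA.eigenvalues j = w ℓ)
    (ℓ : ℕ) (hℓ : ℓ + 1 < p)
    (X : Matrix (Fin n) (Fin N) ℂ)
    (hX : X * Xᴴ = A - (w ⟨ℓ, by omega⟩ : ℂ) • (1 : Matrix (Fin n) (Fin n) ℂ))
    (hrank : X.rank = N) :
    (Xᴴ * X - ((w ⟨ℓ + 1, hℓ⟩ - w ⟨ℓ, by omega⟩ : ℝ) : ℂ) •
        (1 : Matrix (Fin N) (Fin N) ℂ)).IsHermitian
    ∧ (Xᴴ * X - ((w ⟨ℓ + 1, hℓ⟩ - w ⟨ℓ, by omega⟩ : ℝ) : ℂ) •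
        (1 : Matrix (Fin N) (Fin N) ℂ)).PosSemidef
    ∧ (Xᴴ * X - ((w ⟨ℓ + 1, hℓ⟩ - w ⟨ℓ, by omega⟩ : ℝ) : ℂ) •
        (1 : Matrix (Fin N) (Fin N) ℂ)).rank
      = ((A - (w ⟨ℓ, by omega⟩ : ℂ) • (1 : Matrix (Fin n) (Fin n) ℂ))
          * (A - (w ⟨ℓ + 1, hℓ⟩ : ℂ) • (1 : Matrix (Fin n) (Fin n) ℂ))).rank := by
  set w₁ : ℝ := w ⟨ℓ, by omega⟩ with hw₁
  set w₂ : ℝ := w ⟨ℓ + 1, hℓ⟩ with hw₂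
  have hw12 : w₁ ≤ w₂ := hmono (by simp [Fin.le_def])
  set M : Matrix (Fin n) (Fin n) ℂ := A - (w₁ : ℂ) • 1 with hM
  set B : Matrix (Fin N) (Fin N) ℂ := Xᴴ * X with hB
  set D : Matrix (Fin N) (Fin N) ℂ := B - ((w₂ - w₁ : ℝ) : ℂ) • 1 with hD
  set P : Matrix (Fin n) (Fin n) ℂ := M * (A - (w₂ : ℂ) • 1) with hP
  have hMpsd : M.PosSemidef := hX ▸ posSemidef_self_mul_conjTranspose X
  -- every eigenvalue λ of A satisfies (λ - w₁)(λ - w₂) ≥ 0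
  have key : ∀ j, 0 ≤ (hA.eigenvalues j - w₁) * (hA.eigenvalues j - w₂) := by
    intro j
    have hv := hA.mulVec_eigenvectorBasis j
    set v : Fin n → ℂ := ⇑(hA.eigenvectorBasis j) with hvdef
    have hvv : star v ⬝ᵥ v = 1 := by
      have h1 : (inner ℂ (hA.eigenvectorBasis j) (hA.eigenvectorBasis j) : ℂ) = 1 := by
        rw [inner_self_eq_norm_sq_to_K]
        simp [hA.eigenvectorBasis.orthonormal.1 j]
      rw [EuclideanSpace.inner_eq_star_dotProduct, dotProduct_comm] at h1
      exact h1
    have h0 := hMpsd.dotProduct_mulVec_nonneg v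
    have hcalc : star v ⬝ᵥ (M *ᵥ v) = ((hA.eigenvalues j - w₁ : ℝ) : ℂ) := by
      rw [hM, sub_mulVec, hv, smul_mulVec, one_mulVec, dotProduct_sub]
      have hsm : (hA.eigenvalues j • v) = ((hA.eigenvalues j : ℂ)) • v := by
        ext i; simp [Complex.real_smul]
      rw [hsm, dotProduct_smul, dotProduct_smul, hvv]
      simp only [smul_eq_mul, mul_one]
      push_cast
      ring
    rw [hcalc] at h0
    have hge : w₁ ≤ hA.eigenvalues j := by
      rw [Complex.zero_le_real] at h0
      linarith
    obtain ⟨a, ha⟩ := heig j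
    rcases le_or_gt a.1 ℓ with hle | hlt
    · have : w a ≤ w₁ := hmono (by simp [Fin.le_def, hle])
      have : hA.eigenvalues j = w₁ := le_antisymm (ha ▸ this) hge
      rw [this]
      simp
    · have h2 : w₂ ≤ hA.eigenvalues j := by
        rw [ha]
        exact hmono (by simp [Fin.le_def]; omega)
      have hf1 : (0:ℝ) ≤ hA.eigenvalues j - w₁ := by linarith
      have hf2 : (0:ℝ) ≤ hA.eigenvalues j - w₂ := by linarith
      exact mul_nonneg hf1 hf2
  -- spectral decomposition: P is PSD
  set U : Matrix (Fin n) (Fin n) ℂ := (hA.eigenvectorUnitary : Matrix (Fin n) (Fin n) ℂ)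
    with hUdef
  have hU1 : U * Uᴴ = 1 := by
    rw [← Matrix.star_eq_conjTranspose]
    exact (Matrix.mem_unitaryGroup_iff).mp (hA.eigenvectorUnitary).2
  have hU2 : Uᴴ * U = 1 := by
    rw [← Matrix.star_eq_conjTranspose]
    exact (Matrix.mem_unitaryGroup_iff').mp (hA.eigenvectorUnitary).2
  have hMU : ∀ (r : ℝ), A - (r : ℂ) • 1
      = U * diagonal (fun i => ((hA.eigenvalues i - r : ℝ) : ℂ)) * Uᴴ := by
    intro r
    have hsp : A = U * diagonal (RCLike.ofReal ∘ hA.eigenvalues) * Uᴴ := by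
      rw [← Matrix.star_eq_conjTranspose]
      exact hA.spectral_theorem
    have hone : (r : ℂ) • (1 : Matrix (Fin n) (Fin n) ℂ)
        = U * ((r : ℂ) • 1) * Uᴴ := by
      rw [mul_smul_comm, smul_mul_assoc, mul_one, hU1]
    calc A - (r : ℂ) • 1
        = U * diagonal (RCLike.ofReal ∘ hA.eigenvalues) * Uᴴ - U * ((r : ℂ) • 1) * Uᴴ := by
          rw [← hsp, ← hone]
      _ = U * (diagonal (RCLike.ofReal ∘ hA.eigenvalues) - (r : ℂ) • 1) * Uᴴ := by
          rw [Matrix.mul_sub, Matrix.sub_mul]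
      _ = U * diagonal (fun i => ((hA.eigenvalues i - r : ℝ) : ℂ)) * Uᴴ := by
          congr 2
          ext i k
          by_cases h : i = k
          · subst h
            simp [Function.comp, Matrix.one_apply]
          · simp [h, Matrix.one_apply, diagonal_apply_ne _ h]
  have hPU : P = U * diagonal
      (fun i => (((hA.eigenvalues i - w₁) * (hA.eigenvalues i - w₂) : ℝ) : ℂ)) * Uᴴ := by
    rw [hP, hM, hMU w₁, hMU w₂]
    calc (U * diagonal (fun i => ((hA.eigenvalues i - w₁ : ℝ) : ℂ)) * Uᴴ)
          * (U * diagonal (fun i => ((hA.eigenvalues i - w₂ : ℝ) : ℂ)) * Uᴴ)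
        = U * (diagonal (fun i => ((hA.eigenvalues i - w₁ : ℝ) : ℂ)) * ((Uᴴ * U)
          * (diagonal (fun i => ((hA.eigenvalues i - w₂ : ℝ) : ℂ)) * Uᴴ))) := by
          simp only [Matrix.mul_assoc]
      _ = U * diagonal
          (fun i => (((hA.eigenvalues i - w₁) * (hA.eigenvalues i - w₂) : ℝ) : ℂ)) * Uᴴ := by
          rw [hU2, one_mul, ← Matrix.mul_assoc, ← Matrix.mul_assoc,
            Matrix.mul_assoc U, diagonal_mul_diagonal]
          congr 2
          ext i
          push_cast
          ring
  have hPpsd : P.PosSemidef := by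
    rw [hPU]
    have hdiag : (diagonal
        (fun i => (((hA.eigenvalues i - w₁) * (hA.eigenvalues i - w₂) : ℝ) : ℂ))).PosSemidef := by
      rw [posSemidef_diagonal_iff]
      intro i
      rw [Complex.zero_le_real]
      exact key i
    exact hdiag.mul_mul_conjTranspose_same U
  -- the key identity P = X * D * Xᴴ
  have hA2 : A - (w₂ : ℂ) • 1 = M - ((w₂ - w₁ : ℝ) : ℂ) • 1 := by
    rw [hM]
    have : ((w₂ : ℂ)) • (1 : Matrix (Fin n) (Fin n) ℂ)
        = (w₁ : ℂ) • 1 + ((w₂ - w₁ : ℝ) : ℂ) • 1 := by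
      rw [← add_smul]
      push_cast
      ring_nf
    rw [this]
    abel
  have hPD : P = X * D * Xᴴ := by
    rw [hP, hA2, hD, hB, ← hX]
    simp only [Matrix.mul_sub, Matrix.sub_mul, Matrix.mul_smul, Matrix.smul_mul,
      Matrix.mul_one, Matrix.one_mul, Matrix.mul_assoc]
  have hBDB : Xᴴ * P * X = B * D * B := by
    rw [hPD, hB]
    simp only [Matrix.mul_assoc]
  -- B is invertible
  have hBrank : B.rank = N := by rw [hB, rank_conjTranspose_mul_self, hrank]
  have hBunit : IsUnit B := by
    rw [← Matrix.mulVec_surjective_iff_isUnit]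
    have htop : LinearMap.range B.mulVecLin = ⊤ := by
      apply Submodule.eq_top_of_finrank_eq
      rw [← Matrix.rank] at *
      simp [hBrank]
    intro y
    obtain ⟨x, hx⟩ := (LinearMap.range_eq_top.mp htop) y
    exact ⟨x, hx⟩
  have hBdet : IsUnit B.det := (Matrix.isUnit_iff_isUnit_det _).mp hBunit
  have hBH : B.IsHermitian := hB ▸ isHermitian_conjTranspose_mul_self X
  have hDrec : D = B⁻¹ * (Xᴴ * P * X) * B⁻¹ := by
    rw [hBDB]
    calc D = (B⁻¹ * B) * D * (B * B⁻¹) := by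
          rw [Matrix.nonsing_inv_mul B hBdet, Matrix.mul_nonsing_inv B hBdet, one_mul, mul_one]
      _ = B⁻¹ * (B * D * B) * B⁻¹ := by simp only [Matrix.mul_assoc]
  have hDpsd : D.PosSemidef := by
    have h := hPpsd.mul_mul_conjTranspose_same (B⁻¹ * Xᴴ)
    have hct : (B⁻¹ * Xᴴ)ᴴ = X * B⁻¹ := by
      rw [conjTranspose_mul, conjTranspose_conjTranspose, hBH.inv.eq]
    rw [hct] at h
    have heq : B⁻¹ * Xᴴ * P * (X * B⁻¹) = D := by
      rw [hDrec]
      simp only [Matrix.mul_assoc]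
    rwa [heq] at h
  refine ⟨hDpsd.1, hDpsd, ?_⟩
  have r1 : D.rank ≤ P.rank :=
    calc D.rank = (B⁻¹ * (Xᴴ * P * X) * B⁻¹).rank := by rw [← hDrec]
      _ ≤ (B⁻¹ * (Xᴴ * P * X)).rank := rank_mul_le_left _ _
      _ ≤ (Xᴴ * P * X).rank := rank_mul_le_right _ _
      _ ≤ (Xᴴ * P).rank := rank_mul_le_left _ _
      _ ≤ P.rank := rank_mul_le_right _ _
  have r2 : P.rank ≤ D.rank :=
    calc P.rank = (X * D * Xᴴ).rank := by rw [← hPD]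
      _ ≤ (X * D).rank := rank_mul_le_left _ _
      _ ≤ D.rank := rank_mul_le_right _ _
  exact le_antisymm r1 r2
end

section
/- Let G_1,...,G_{s−1} be the (s−1)n × (s−1)n complex matrices with n×n blocks (G_i)_{jk} = δ_{ij}(A_k + δ_{ik} λ 𝟙), where A_1,...,A_{s−1} are n×n matrices and λ ∈ ℂ. Then the subspace V = (ker A_1 ⊕ ker A_2 ⊕ ... ⊕ ker A_{s−1}) + ker(Σ_i G_i) of ℂ^{(s−1)n} is invariant under all G_i. -/
set_option maxHeartbeats 1000000 in
/-- With the middle-convolution matrices `G i` of block form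
`(G i)_{jk} = δ_{ij}(A k + δ_{ik} λ 𝟙)` acting on `ℂ^{m·n}` (here `m = s - 1`), the
subspace `V = (ker A₁ ⊕ … ⊕ ker A_m) + ker (∑ i, G i)` is invariant under every `G i`.
The blockwise direct sum of kernels is encoded as `⨅ j, ker (D j)` where `D j` applies
`A j` on the `j`-th block and `0` elsewhere. -/
theorem middle_convolution_invariant_subspace (m n : ℕ)
    (A : Fin m → Matrix (Fin n) (Fin n) ℂ) (lam : ℂ)
    (G : Fin m → Matrix (Fin m × Fin n) (Fin m × Fin n) ℂ)
    (hG : ∀ i j k a b, G i (j, a) (k, b) =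
      if j = i then (A k + (if k = i then lam • (1 : Matrix (Fin n) (Fin n) ℂ) else 0)) a b
      else 0)
    (D : Fin m → Matrix (Fin m × Fin n) (Fin m × Fin n) ℂ)
    (hD : ∀ j j' k a b, D j (j', a) (k, b) = if j' = j ∧ k = j then A j a b else 0)
    (V : Submodule ℂ (Fin m × Fin n → ℂ))
    (hV : V = (⨅ j, LinearMap.ker (Matrix.toLin' (D j)))
        ⊔ LinearMap.ker (Matrix.toLin' (∑ i, G i))) :
    ∀ i, V.map (Matrix.toLin' (G i)) ≤ V := by
  subst hV
  have keyG : ∀ (i : Fin m) (x : Fin m × Fin n → ℂ) (j : Fin m) (a : Fin n),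
      Matrix.toLin' (G i) x (j, a) =
      if j = i then (∑ k, ∑ b, A k a b * x (k, b)) + lam * x (i, a) else 0 := by
    intro i x j a
    rw [Matrix.toLin'_apply, Matrix.mulVec, dotProduct, Fintype.sum_prod_type]
    by_cases hji : j = i
    · subst hji
      simp only [hG, if_pos rfl, eq_self_iff_true, if_true, Matrix.add_apply, ite_apply,
        Matrix.smul_apply, Matrix.one_apply, Matrix.zero_apply, smul_eq_mul, mul_ite, mul_one,
        mul_zero, ite_mul, zero_mul, add_mul, Finset.sum_add_distrib]
      congr 1
      rw [Finset.sum_comm]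
      have hent : ∀ (y : Fin n) (k : Fin m),
          ((if k = j then lam • (1 : Matrix (Fin n) (Fin n) ℂ) else 0) a y) * x (k, y)
          = if k = j then (if a = y then lam * x (k, y) else 0) else 0 := by
        intro y k
        split_ifs with h1 h2 <;> simp_all [Matrix.one_apply]
      simp only [hent]
      simp [Finset.sum_ite_eq', Finset.sum_ite_eq]
    · simp [hG, hji]
  have keyD : ∀ (j : Fin m) (x : Fin m × Fin n → ℂ) (j' : Fin m) (a : Fin n),
      Matrix.toLin' (D j) x (j', a) = if j' = j then ∑ b, A j a b * x (j, b) else 0 := by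
    intro j x j' a
    rw [Matrix.toLin'_apply, Matrix.mulVec, dotProduct, Fintype.sum_prod_type]
    by_cases hj : j' = j
    · subst hj
      simp only [hD, true_and, eq_self_iff_true, if_true, ite_mul, zero_mul]
      rw [Finset.sum_comm]
      simp [Finset.sum_ite_eq, Finset.sum_ite_eq']
    · simp [hD, hj]
  have hsum : Matrix.toLin' (∑ i, G i) = ∑ i, Matrix.toLin' (G i) :=
    map_sum (Matrix.toLin'.toLinearMap) _ _
  have keyS : ∀ (x : Fin m × Fin n → ℂ) (j : Fin m) (a : Fin n),
      Matrix.toLin' (∑ i, G i) x (j, a) =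
      (∑ k, ∑ b, A k a b * x (k, b)) + lam * x (j, a) := by
    intro x j a
    rw [hsum]
    have h1 : (∑ i, Matrix.toLin' (G i)) x (j, a) = ∑ i, Matrix.toLin' (G i) x (j, a) := by
      rw [LinearMap.sum_apply]
      exact Finset.sum_apply _ _ _
    rw [h1]
    simp only [keyG]
    simp [Finset.sum_ite_eq]
  intro i
  rw [Submodule.map_sup]
  apply sup_le
  · refine le_trans ?_ le_sup_left
    rintro _ ⟨x, hx, rfl⟩
    simp only [SetLike.mem_coe, Submodule.mem_iInf, LinearMap.mem_ker] at hx
    simp only [SetLike.mem_coe, Submodule.mem_iInf, LinearMap.mem_ker]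
    have hx0 : ∀ (k : Fin m) (a : Fin n), ∑ b, A k a b * x (k, b) = 0 := by
      intro k a
      have h := congrFun (hx k) (k, a)
      simpa [keyD] using h
    have hS : ∀ a : Fin n, (∑ k, ∑ b, A k a b * x (k, b)) = 0 := by
      intro a; simp [hx0]
    intro j
    ext ⟨j', a⟩
    rw [keyD]
    simp only [Pi.zero_apply]
    by_cases hj : j' = j
    · rw [if_pos hj]
      by_cases hji : j = i
      · have hb : ∀ b : Fin n, Matrix.toLin' (G i) x (j, b) = lam * x (i, b) := by
          intro b; rw [keyG, if_pos hji, hS, zero_add]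
        calc (∑ b, A j a b * Matrix.toLin' (G i) x (j, b))
            = ∑ b, lam * (A j a b * x (i, b)) := by
              refine Finset.sum_congr rfl fun b _ => ?_
              rw [hb]; ring
          _ = lam * ∑ b, A j a b * x (i, b) := by rw [Finset.mul_sum]
          _ = 0 := by rw [hji, hx0, mul_zero]
      · have hb : ∀ b : Fin n, Matrix.toLin' (G i) x (j, b) = 0 := by
          intro b; rw [keyG, if_neg hji]
        simp [hb]
    · rw [if_neg hj]
  · rintro _ ⟨x, hx, rfl⟩
    simp only [SetLike.mem_coe, LinearMap.mem_ker] at hx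
    have hz : Matrix.toLin' (G i) x = 0 := by
      ext ⟨j, a⟩
      rw [keyG]
      simp only [Pi.zero_apply]
      by_cases hji : j = i
      · rw [if_pos hji]
        have h := congrFun hx (i, a)
        rw [keyS] at h
        simpa using h
      · rw [if_neg hji]
    rw [hz]
    exact Submodule.zero_mem _
end

section
/- If E → ℙ¹ is a semistable elliptic surface with section, non-zero Euler characteristic, and exactly 4 singular fibers all of Kodaira type I_{m_a}, then its geometric genus p_g(E) = 0, i.e., χ(O_E) = 1 (equivalently the topological Euler characteristic is 12), so E is a rational elliptic surface. -/
/-- A semistable elliptic surface over `ℙ¹` with section, non-zero Euler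
characteristic, and exactly 4 singular fibers (all of type `I_{m_a}`, `m_a ≥ 1`) has
geometric genus `p_g = 0` and topological Euler characteristic `χ_top = 12` (hence is
rational).  The standard facts `χ_top = ∑ m_a`, `b₂ = χ_top - 2`,
`χ_top = 12 (p_g + 1)`, `ρ ≥ 2 + ∑ (m_a - 1)` and `ρ ≤ b₂ - 2 p_g` are taken as
hypotheses. -/
theorem semistable_four_fibers_rational (s : ℕ) (hs : s = 4)
    (m : Fin s → ℤ) (hm : ∀ a, 1 ≤ m a)
    (χtop b₂ pg ρ : ℤ)
    (hχ : χtop = ∑ a, m a)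
    (hχne : χtop ≠ 0)
    (hb₂ : b₂ = χtop - 2)
    (hpg : χtop = 12 * (pg + 1))
    (hρ₁ : 2 + ∑ a, (m a - 1) ≤ ρ)
    (hρ₂ : ρ ≤ b₂ - 2 * pg) :
    pg = 0 ∧ χtop = 12 := by
  have hsum : ∑ a, (m a - 1) = (∑ a, m a) - s := by
    rw [Finset.sum_sub_distrib]
    simp
  have hge : (s : ℤ) ≤ ∑ a, m a := by
    calc (s : ℤ) = ∑ _a : Fin s, (1 : ℤ) := by simp
    _ ≤ ∑ a, m a := Finset.sum_le_sum fun a _ => hm a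
  have hpg0 : pg = 0 := by
    subst hs; omega
  exact ⟨hpg0, by omega⟩
end

section
/- For a relatively minimal semistable elliptic surface E → ℙ¹ with section and s singular fibers of types I_{m_1},...,I_{m_s} (each m_a ≥ 1), the geometric genus satisfies 2 p_g(E) ≤ s − 4. In particular s ≥ 4, and a semistable elliptic K3 surface (p_g = 1) has at least 6 singular fibers. -/
/-- For a relatively minimal semistable elliptic surface over `ℙ¹` with
section and `s ≥ 1` singular fibers of types `I_{m_a}` (`m_a ≥ 1`), the geometric genus
satisfies `2 p_g ≤ s - 4`; in particular `s ≥ 4`, and `p_g = 1` (elliptic K3) forces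
`s ≥ 6`.  The standard facts `χ_top = ∑ m_a`, `b₂ = χ_top - 2`, `χ_top = 12 (p_g + 1)`,
`ρ ≥ 2 + ∑ (m_a - 1)` and `ρ ≤ b₂ - 2 p_g` are taken as hypotheses. -/
theorem semistable_genus_inequality (s : ℕ) (hs : 1 ≤ s)
    (m : Fin s → ℤ) (hm : ∀ a, 1 ≤ m a)
    (χtop b₂ pg ρ : ℤ)
    (hχ : χtop = ∑ a, m a)
    (hb₂ : b₂ = χtop - 2)
    (hpg : χtop = 12 * (pg + 1))
    (hρ₁ : 2 + ∑ a, (m a - 1) ≤ ρ)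
    (hρ₂ : ρ ≤ b₂ - 2 * pg) :
    2 * pg ≤ (s : ℤ) - 4 ∧ 4 ≤ s ∧ (pg = 1 → 6 ≤ s) := by
  have hsum : ∑ a, (m a - 1) = (∑ a, m a) - s := by
    rw [Finset.sum_sub_distrib]
    simp [mul_comm]
  have hχs : (s : ℤ) ≤ χtop := by
    rw [hχ]
    calc (s:ℤ) = ∑ _a : Fin s, (1:ℤ) := by simp
    _ ≤ ∑ a, m a := Finset.sum_le_sum fun a _ => hm a
  have hs1 : (1:ℤ) ≤ χtop := le_trans (by exact_mod_cast hs) hχs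
  have hpg0 : 0 ≤ pg := by omega
  have h1 : 2 * pg ≤ (s : ℤ) - 4 := by
    rw [hsum, ← hχ] at hρ₁; omega
  refine ⟨h1, ?_, ?_⟩
  · have : (4:ℤ) ≤ s := by omega
    exact_mod_cast this
  · intro hpg1
    have : (6:ℤ) ≤ s := by omega
    exact_mod_cast this
end

section
/- For the reflection functor data at a sink σ with λ_σ ≠ 0: given linear maps X_v : X_{s(v)} → X_σ and X_{v*}: X_σ → X_{s(v)} for arrows v into σ satisfying Σ_v X_v X_{v*} = −λ_σ·𝟙_{X_σ}, define X_⊕ = ⊕_v X_{s(v)}, μ = Σ_v μ_v X_{v*} : X_σ → X_⊕ and π = −(1/λ_σ) Σ_v X_v π_v : X_⊕ → X_σ (with μ_v, π_v the canonical inclusions/projections). Then π μ = 𝟙_{X_σ}, hence μπ is an idempotent endomorphism of X_⊕, X_⊕ decomposes as im(μπ) ⊕ im(𝟙 − μπ), im(μπ) ≅ X_σ, and dim im(𝟙 − μπ) = Σ_v dim X_{s(v)} − dim X_σ. -/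
open Module

/-- Linear-algebra core of the reflection functor at a sink `σ` with
`λ_σ ≠ 0`.  Given `X_v : X_{s(v)} → X_σ`, `X_{v*} : X_σ → X_{s(v)}` with
`∑_v X_v X_{v*} = -λ_σ·𝟙`, set `X_⊕ = ⊕_v X_{s(v)}`, `μ = ∑_v μ_v X_{v*}` and
`π = -(1/λ_σ) ∑_v X_v π_v`.  Then `π μ = 𝟙`, `μπ` is idempotent,
`X_⊕ = im(μπ) ⊕ im(𝟙 - μπ)`, `im(μπ) ≅ X_σ`, and
`dim im(𝟙 - μπ) = ∑_v dim X_{s(v)} - dim X_σ`. -/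
theorem reflection_functor_core (ι : Type*) [Fintype ι] [DecidableEq ι]
    (Xσ : Type*) [AddCommGroup Xσ] [Module ℂ Xσ] [FiniteDimensional ℂ Xσ]
    (Xs : ι → Type*) [∀ v, AddCommGroup (Xs v)] [∀ v, Module ℂ (Xs v)]
    [∀ v, FiniteDimensional ℂ (Xs v)]
    (Xv : ∀ v, Xs v →ₗ[ℂ] Xσ) (Xvs : ∀ v, Xσ →ₗ[ℂ] Xs v)
    (lamσ : ℂ) (hlam : lamσ ≠ 0)
    (hrel : (∑ v, (Xv v).comp (Xvs v)) = -lamσ • (LinearMap.id : Xσ →ₗ[ℂ] Xσ))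
    (μ : Xσ →ₗ[ℂ] ∀ v, Xs v)
    (hμ : μ = ∑ v, (LinearMap.single ℂ Xs v).comp (Xvs v))
    (π : (∀ v, Xs v) →ₗ[ℂ] Xσ)
    (hπ : π = -lamσ⁻¹ • ∑ v, (Xv v).comp (LinearMap.proj v)) :
    π.comp μ = LinearMap.id
    ∧ (μ.comp π).comp (μ.comp π) = μ.comp π
    ∧ IsCompl (LinearMap.range (μ.comp π))
        (LinearMap.range ((LinearMap.id : (∀ v, Xs v) →ₗ[ℂ] ∀ v, Xs v) - μ.comp π))
    ∧ Nonempty ((LinearMap.range (μ.comp π)) ≃ₗ[ℂ] Xσ)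
    ∧ (finrank ℂ (LinearMap.range
          ((LinearMap.id : (∀ v, Xs v) →ₗ[ℂ] ∀ v, Xs v) - μ.comp π)) : ℤ)
        = (∑ v, (finrank ℂ (Xs v) : ℤ)) - (finrank ℂ Xσ : ℤ) := by
  -- π ∘ μ = id
  have hπμ : π.comp μ = LinearMap.id := by
    ext x
    subst hμ hπ
    simp only [LinearMap.comp_apply, LinearMap.sum_apply, LinearMap.smul_apply,
      LinearMap.neg_apply, map_sum, LinearMap.proj_apply, LinearMap.single_apply]
    have := congrArg (fun f : Xσ →ₗ[ℂ] Xσ => f x) hrel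
    simp only [LinearMap.sum_apply, LinearMap.comp_apply, LinearMap.smul_apply,
      LinearMap.id_apply, neg_smul] at this
    have key : ∀ v, (∑ w, (Xv v) (Pi.single w ((Xvs w) x) v)) = (Xv v) ((Xvs v) x) := by
      intro v
      rw [Finset.sum_eq_single v]
      · simp
      · intro w _ hw; simp [Pi.single_eq_of_ne (Ne.symm hw)]
      · simp
    rw [← Finset.smul_sum, Finset.sum_comm, Finset.sum_congr rfl fun v _ => key v, this]
    simp [smul_smul, inv_mul_cancel₀ hlam]
  set p := μ.comp π with hp
  have hidem : p.comp p = p := by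
    rw [hp, LinearMap.comp_assoc, ← LinearMap.comp_assoc π, hπμ, LinearMap.id_comp]
  have hμinj : Function.Injective μ := by
    intro a b hab
    have := congrArg π hab
    have h1 : π (μ a) = a := by rw [← LinearMap.comp_apply, hπμ]; rfl
    have h2 : π (μ b) = b := by rw [← LinearMap.comp_apply, hπμ]; rfl
    rwa [h1, h2] at this
  have hrange : LinearMap.range p = LinearMap.range μ := by
    apply le_antisymm
    · rintro _ ⟨x, rfl⟩; exact ⟨π x, rfl⟩
    · rintro _ ⟨x, rfl⟩
      refine ⟨μ x, ?_⟩
      have h1 : π (μ x) = x := LinearMap.ext_iff.mp hπμ x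
      show μ (π (μ x)) = μ x
      rw [h1]
  -- range(1-p) = ker p
  have hker : LinearMap.range ((LinearMap.id : (∀ v, Xs v) →ₗ[ℂ] ∀ v, Xs v) - p)
      = LinearMap.ker p := by
    apply le_antisymm
    · rintro _ ⟨x, rfl⟩
      simp only [LinearMap.mem_ker, LinearMap.sub_apply, LinearMap.id_apply, map_sub]
      have : p (p x) = p x := by rw [← LinearMap.comp_apply, hidem]
      simp [this]
    · intro x hx
      refine ⟨x, ?_⟩
      simp only [LinearMap.mem_ker] at hx
      simp [hx]
  have hfix : ∀ x ∈ LinearMap.range p, p x = x := by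
    rintro _ ⟨y, rfl⟩
    rw [← LinearMap.comp_apply, hidem]
  have hcompl : IsCompl (LinearMap.range p) (LinearMap.ker p) := by
    constructor
    · rw [disjoint_iff]
      apply Submodule.eq_bot_iff _ |>.mpr
      rintro x ⟨hx1, hx2⟩
      have hx2' : p x = 0 := hx2
      rw [← hfix x hx1, hx2']
    · rw [codisjoint_iff, Submodule.eq_top_iff']
      intro x
      refine Submodule.mem_sup.mpr ⟨p x, ⟨x, rfl⟩, x - p x, ?_, by abel⟩
      simp only [LinearMap.mem_ker, map_sub]
      have : p (p x) = p x := by rw [← LinearMap.comp_apply, hidem]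
      simp [this]
  have hequiv : Nonempty ((LinearMap.range p) ≃ₗ[ℂ] Xσ) := by
    rw [hrange]
    exact ⟨(LinearEquiv.ofInjective μ hμinj).symm⟩
  refine ⟨hπμ, hidem, hker ▸ hcompl, hequiv, ?_⟩
  have hr : finrank ℂ (LinearMap.range p) = finrank ℂ Xσ :=
    hequiv.some.finrank_eq
  have htot : finrank ℂ (LinearMap.range p) + finrank ℂ (LinearMap.ker p)
      = finrank ℂ (∀ v, Xs v) := by
    have := LinearMap.finrank_range_add_finrank_ker p
    linarith
  have hpi : finrank ℂ (∀ v, Xs v) = ∑ v, finrank ℂ (Xs v) :=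
    Module.finrank_pi_fintype ℂ
  rw [hker]
  rw [hr, hpi] at htot
  have h2 := congrArg (Nat.cast : ℕ → ℤ) htot
  push_cast at h2 ⊢
  linarith
end
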